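/- Let M be a metric space, n, k, z ∈ ℕ with z < n and k ≥ 1, μ ∈ (0,1), and let x, y : Fin n → M be two families of points. Let r_opt be the infimum of cost_z(x, H) over all nonempty finite sets H ⊆ M with |H| = k. Suppose d(x_i, y_i) ≤ μ·r_opt for every i ∈ Fin n. Then for every nonempty finite set H ⊆ M with |H| = k, (1 − μ)·cost_z(x, H) ≤ cost_z(y, H) ≤ (1 + μ)·cost_z(x, H); that is, y is a μ-coreset of x for k-center clustering with z outliers. -/
import Mathlib


/-- The `k`-center clustering cost with `z` outliers of the point family `x : Fin n → M`
with respect to the center set `H`: the minimum over subsets `I ⊆ Fin n` with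
`|I| ≥ n - z` of `max_{i ∈ I} min_{c ∈ H} dist (x i) c`, expressed as the infimum
of all feasible radii. -/
noncomputable def kCenterCost {M : Type*} [MetricSpace M] (n z : ℕ)
    (x : Fin n → M) (H : Finset M) : ℝ :=
  sInf {r : ℝ | ∃ I : Finset (Fin n), n - z ≤ I.card ∧ ∀ i ∈ I, ∃ c ∈ H, dist (x i) c ≤ r}

lemma kCenterCost_set_nonneg {M : Type*} [MetricSpace M] (n z : ℕ) (hz : z < n)
    (x : Fin n → M) (H : Finset M) :
    ∀ r ∈ {r : ℝ | ∃ I : Finset (Fin n), n - z ≤ I.card ∧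
        ∀ i ∈ I, ∃ c ∈ H, dist (x i) c ≤ r}, 0 ≤ r := by
  rintro r ⟨I, hI, h⟩
  have hIne : I.Nonempty := Finset.card_pos.mp (lt_of_lt_of_le (by omega) hI)
  obtain ⟨i, hi⟩ := hIne
  obtain ⟨c, _, hc⟩ := h i hi
  exact le_trans dist_nonneg hc

lemma kCenterCost_nonneg {M : Type*} [MetricSpace M] (n z : ℕ) (hz : z < n)
    (x : Fin n → M) (H : Finset M) : 0 ≤ kCenterCost n z x H :=
  Real.sInf_nonneg (kCenterCost_set_nonneg n z hz x H)

lemma kCenterCost_set_nonempty {M : Type*} [MetricSpace M] (n z : ℕ) (hz : z < n)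
    (x : Fin n → M) (H : Finset M) (hH : H.Nonempty) :
    {r : ℝ | ∃ I : Finset (Fin n), n - z ≤ I.card ∧
        ∀ i ∈ I, ∃ c ∈ H, dist (x i) c ≤ r}.Nonempty := by
  obtain ⟨c, hc⟩ := hH
  haveI : Nonempty (Fin n) := ⟨⟨0, by omega⟩⟩
  refine ⟨(Finset.univ : Finset (Fin n)).sup' Finset.univ_nonempty (fun i => dist (x i) c),
    Finset.univ, ?_, fun i _ => ⟨c, hc, Finset.le_sup' (fun i => dist (x i) c) (Finset.mem_univ i)⟩⟩
  simp [Finset.card_univ]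

lemma kCenterCost_shift {M : Type*} [MetricSpace M] (n z : ℕ) (hz : z < n)
    (x y : Fin n → M) (H : Finset M) (hH : H.Nonempty) (δ : ℝ)
    (hd : ∀ i, dist (x i) (y i) ≤ δ) :
    kCenterCost n z y H ≤ kCenterCost n z x H + δ := by
  have hbdd : BddBelow {r : ℝ | ∃ I : Finset (Fin n), n - z ≤ I.card ∧
      ∀ i ∈ I, ∃ c ∈ H, dist (x i) c ≤ r} :=
    ⟨0, kCenterCost_set_nonneg n z hz x H⟩
  rw [show kCenterCost n z x H + δ = kCenterCost n z x H + δ from rfl]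
  have : kCenterCost n z y H - δ ≤ kCenterCost n z x H := by
    apply le_csInf (kCenterCost_set_nonempty n z hz x H hH)
    rintro r ⟨I, hI, h⟩
    have hmem : r + δ ∈ {r : ℝ | ∃ I : Finset (Fin n), n - z ≤ I.card ∧
        ∀ i ∈ I, ∃ c ∈ H, dist (y i) c ≤ r} := by
      refine ⟨I, hI, fun i hi => ?_⟩
      obtain ⟨c, hc, hrc⟩ := h i hi
      exact ⟨c, hc, le_trans (dist_triangle (y i) (x i) c)
        (by have := hd i; rw [dist_comm] at this; linarith)⟩
    have := csInf_le ⟨0, kCenterCost_set_nonneg n z hz y H⟩ hmem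
    unfold kCenterCost
    linarith [this]
  linarith

/-- The concluding step of Theorem 7 of the paper: if every point of `x` is moved by at
most `μ·r_opt`, where `r_opt` is the optimal `k`-center-with-`z`-outliers radius of `x`,
then the resulting family `y` is a `μ`-coreset of `x`: for every nonempty center set `H`
of size `k`, `cost_z(y,H) ∈ (1±μ)·cost_z(x,H)`. -/
theorem perturbed_family_is_coreset {M : Type*} [MetricSpace M]
    (n k z : ℕ) (hz : z < n) (hk : 1 ≤ k) (μ : ℝ) (hμ0 : 0 < μ) (hμ1 : μ < 1)
    (x y : Fin n → M) (ropt : ℝ)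
    (hropt : ropt = sInf {r : ℝ | ∃ H : Finset M, H.Nonempty ∧ H.card = k ∧
        r = kCenterCost n z x H})
    (hxy : ∀ i : Fin n, dist (x i) (y i) ≤ μ * ropt) :
    ∀ H : Finset M, H.Nonempty → H.card = k →
      (1 - μ) * kCenterCost n z x H ≤ kCenterCost n z y H ∧
      kCenterCost n z y H ≤ (1 + μ) * kCenterCost n z x H := by
  intro H hH hHk
  have hropt_le : ropt ≤ kCenterCost n z x H := by
    rw [hropt]
    exact csInf_le ⟨0, by rintro r ⟨H', hH', _, rfl⟩; exact kCenterCost_nonneg n z hz x H'⟩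
      ⟨H, hH, hHk, rfl⟩
  have h1 : kCenterCost n z y H ≤ kCenterCost n z x H + μ * ropt :=
    kCenterCost_shift n z hz x y H hH (μ * ropt) hxy
  have h2 : kCenterCost n z x H ≤ kCenterCost n z y H + μ * ropt :=
    kCenterCost_shift n z hz y x H hH (μ * ropt) (fun i => by rw [dist_comm]; exact hxy i)
  constructor <;> nlinarith [hropt_le, h1, h2, hμ0.le]
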